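/- Let X be a normed linear space and E a closed proper affine subset of X not containing 0. Then there exists a closed hyperplane H containing E with inf_{h∈H}‖h‖ = inf_{e∈E}‖e‖. -/

import Mathlib

/-- A closed proper affine set not containing zero is contained in a closed hyperplane
with the same distance to the origin. -/
theorem affine_subset_hyperplane_same_dist {X : Type*} [NormedAddCommGroup X]
    [NormedSpace ℝ X]
    (E : Set X) (hne : E.Nonempty) (hclosed : IsClosed E)
    (haff : ∀ e ∈ E, ∃ V : Submodule ℝ X, V ≠ ⊤ ∧ ((fun z => z - e) '' E) = (V : Set X))
    (h0 : (0 : X) ∉ E) :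
    ∃ (f : X →L[ℝ] ℝ) (c : ℝ), f ≠ 0 ∧ E ⊆ f ⁻¹' {c} ∧
      sInf (norm '' (f ⁻¹' {c} : Set X)) = sInf (norm '' E) := by
  obtain ⟨e, he⟩ := hne
  obtain ⟨V, hVtop, hV⟩ := haff e he
  set d := sInf (norm '' E) with hd
  have hbdd : BddBelow (norm '' E) := ⟨0, fun y ⟨x, _, hx⟩ => hx ▸ norm_nonneg x⟩
  have hEne : (norm '' E).Nonempty := ⟨‖e‖, e, he, rfl⟩
  have hdle : ∀ x ∈ E, d ≤ ‖x‖ := fun x hx => csInf_le hbdd ⟨x, hx, rfl⟩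
  have hdpos : 0 < d := by
    rcases lt_or_ge 0 d with h | h
    · exact h
    have hd0 : d = 0 :=
      le_antisymm h (le_csInf hEne (fun y ⟨x, _, hx⟩ => hx ▸ norm_nonneg x))
    exfalso; apply h0
    rw [← hclosed.closure_eq, Metric.mem_closure_iff]
    intro ε hε
    obtain ⟨y, ⟨x, hxE, rfl⟩, hy⟩ := (csInf_lt_iff hbdd hEne).mp
      (show d < ε by rw [hd0]; exact hε)
    exact ⟨x, hxE, by simpa [dist_eq_norm] using hy⟩
  have hmemV : ∀ x, x ∈ E ↔ x - e ∈ V := by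
    intro x
    constructor
    · intro hx; rw [← SetLike.mem_coe, ← hV]; exact ⟨x, hx, rfl⟩
    · intro hx
      rw [← SetLike.mem_coe, ← hV] at hx
      obtain ⟨y, hy, hyx⟩ := hx
      have : y = x := by
        have h := congrArg (· + e) hyx
        simpa using h
      exact this ▸ hy
  have hEconv : Convex ℝ E := by
    intro x hx y hy a b ha hb hab
    rw [hmemV] at hx hy ⊢
    have heq : a • x + b • y - e = a • (x - e) + b • (y - e) := by
      calc a • x + b • y - e = a • x + b • y - (a + b) • e := by rw [hab, one_smul]
        _ = a • (x - e) + b • (y - e) := by rw [add_smul, smul_sub, smul_sub]; abel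
    rw [heq]
    exact V.add_mem (V.smul_mem a hx) (V.smul_mem b hy)
  have hdisj : Disjoint (Metric.ball (0:X) d) E :=
    Set.disjoint_left.mpr fun x hx hxE =>
      absurd (hdle x hxE) (not_le.mpr (by simpa using mem_ball_zero_iff.mp hx))
  obtain ⟨f, u, hfu, huf⟩ :=
    geometric_hahn_banach_open (convex_ball 0 d) Metric.isOpen_ball hEconv hdisj
  have hupos : 0 < u := by
    have := hfu 0 (by simpa using hdpos)
    simpa using this
  have hfV : ∀ v ∈ V, f v = 0 := by
    intro v hv
    by_contra hne0
    have key : ∀ t : ℝ, u ≤ f e + t * f v := by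
      intro t
      have hmem : e + t • v ∈ E := (hmemV _).mpr (by simpa using V.smul_mem t hv)
      simpa [map_add, map_smul, smul_eq_mul] using huf _ hmem
    have := key ((u - 1 - f e) / f v)
    rw [div_mul_cancel₀ _ hne0] at this
    linarith
  set c := f e with hc
  have hcu : u ≤ c := huf e he
  have hcpos : 0 < c := lt_of_lt_of_le hupos hcu
  have hEsub : E ⊆ f ⁻¹' {c} := by
    intro x hx
    have hv : f (x - e) = 0 := hfV _ ((hmemV x).mp hx)
    have : f x - f e = 0 := by rw [← map_sub]; exact hv
    simp only [Set.mem_preimage, Set.mem_singleton_iff]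
    linarith
  refine ⟨f, c, ?_, hEsub, ?_⟩
  · intro hf0
    rw [hf0] at hc
    simp at hc
    linarith
  · apply le_antisymm
    · exact csInf_le_csInf ⟨0, fun y ⟨x, _, hx⟩ => hx ▸ norm_nonneg x⟩
        hEne (Set.image_mono hEsub)
    · refine le_csInf ⟨‖e‖, e, hEsub he, rfl⟩ ?_
      rintro y ⟨x, hx, rfl⟩
      by_contra hlt
      push_neg at hlt
      have hxball : x ∈ Metric.ball (0:X) d := mem_ball_zero_iff.mpr hlt
      have := hfu x hxball
      have hfx : f x = c := hx
      linarith
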